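/- Let s ≥ 1 and let F be the free monoid of words over ℤ/sℤ, with involution (i_1…i_k)^- = (-i_k)…(-i_1). In the free ℤ-module ℤA with basis {a_x : x ∈ F}, equipped with the ℤ-bilinear product a_x ⊗ a_y = Σ_{(v,z,w) : x = vz, y = z̄w} (a_{vw} + a_{v·w}) (with the term a_{v·w} omitted whenever v or w is empty), the coefficient of the basis element a_∅ of the empty word in a_x ⊗ a_{ȳ} equals 1 if x = y and equals 0 if x ≠ y, for all words x, y ∈ F. -/

import Mathlib

/-- The involution on words over `ℤ/sℤ`: `(i_1 … i_k)⁻ = (-i_k) … (-i_1)`. -/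
def wordInv (s : ℕ) (x : List (ZMod s)) : List (ZMod s) :=
  (x.map fun a => -a).reverse

/-- The fusion term: for nonempty `v = v'i` and `w = jw'`, the basis element of
`v · w = v'(i+j)w'`; it is `0` (omitted) when `v` or `w` is empty. -/
noncomputable def fuseTerm (s : ℕ) (v w : List (ZMod s)) : List (ZMod s) →₀ ℤ :=
  match v.getLast?, w with
  | some i, j :: w' => Finsupp.single (v.dropLast ++ (i + j) :: w') 1
  | _, _ => 0

/-- The product of two basis elements `a_x ⊗ a_y`: the sum over all decompositions
`x = vz`, `y = z̄w` of `a_{vw} + a_{v·w}` (the second term omitted when `v` or `w`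
is empty). Decompositions are parametrized by the length `t` of `z`. -/
noncomputable def basisMul (s : ℕ) (x y : List (ZMod s)) : List (ZMod s) →₀ ℤ :=
  ∑ t ∈ Finset.range (min x.length y.length + 1),
    if y.take t = wordInv s (x.drop (x.length - t)) then
      Finsupp.single (x.take (x.length - t) ++ y.drop t) 1 +
        fuseTerm s (x.take (x.length - t)) (y.drop t)
    else 0

/-- The `ℤ`-bilinear extension of `basisMul` to the free `ℤ`-module on the words
over `ℤ/sℤ`. -/
noncomputable def fusionMul (s : ℕ) (f g : List (ZMod s) →₀ ℤ) : List (ZMod s) →₀ ℤ :=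
  f.sum fun x cx => g.sum fun y cy => (cx * cy) • basisMul s x y

lemma fuseTerm_apply_nil (s : ℕ) (v w : List (ZMod s)) : fuseTerm s v w [] = 0 := by
  unfold fuseTerm
  rcases h : v.getLast? with _ | i <;> rcases w with _ | ⟨j, w'⟩ <;>
    simp [Finsupp.single_apply]

lemma wordInv_length (s : ℕ) (x : List (ZMod s)) : (wordInv s x).length = x.length := by
  simp [wordInv]

lemma wordInv_wordInv (s : ℕ) (x : List (ZMod s)) : wordInv s (wordInv s x) = x := by
  simp [wordInv, List.map_reverse, List.map_map, Function.comp]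

/-- the coefficient of the empty word in `a_x ⊗ a_{ȳ}` is `1` if
`x = y` and `0` otherwise: the linear form counting the multiplicity of the unit
is positive definite on the fusion ring. -/
theorem fusion_unit_multiplicity (s : ℕ) (hs : 1 ≤ s) (x y : List (ZMod s)) :
    basisMul s x (wordInv s y) [] = if x = y then 1 else 0 := by
  unfold basisMul
  rw [Finsupp.finset_sum_apply]
  have key : ∀ t ∈ Finset.range (min x.length (wordInv s y).length + 1),
      ((if (wordInv s y).take t = wordInv s (x.drop (x.length - t)) then
        Finsupp.single (x.take (x.length - t) ++ (wordInv s y).drop t) 1 +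
          fuseTerm s (x.take (x.length - t)) ((wordInv s y).drop t)
      else 0) : List (ZMod s) →₀ ℤ) [] =
      if t = x.length ∧ t = y.length ∧ x = y then 1 else 0 := by
    intro t ht
    simp only [Finset.mem_range, Nat.lt_succ_iff, le_min_iff, wordInv_length] at ht
    obtain ⟨htx, hty⟩ := ht
    rw [apply_ite (fun f : List (ZMod s) →₀ ℤ => f [])]
    simp only [Finsupp.add_apply, fuseTerm_apply_nil, add_zero, Finsupp.zero_apply,
      Finsupp.single_apply]
    by_cases hc : (wordInv s y).take t = wordInv s (x.drop (x.length - t))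
    · rw [if_pos hc]
      by_cases he : x.take (x.length - t) ++ (wordInv s y).drop t = []
      · rw [if_pos he]
        simp only [List.append_eq_nil_iff, List.take_eq_nil_iff, List.drop_eq_nil_iff,
          wordInv_length] at he
        have htn : t = x.length := by
          rcases he.1 with h | h
          · omega
          · simp [h] at htx ⊢; omega
        have htm : t = y.length := le_antisymm hty he.2
        have : (wordInv s y) = wordInv s x := by
          rw [← List.take_length (l := wordInv s y), wordInv_length, ← htm, hc, htn]
          simp
        have hxy : x = y := by
          have := congrArg (wordInv s) this
          rw [wordInv_wordInv, wordInv_wordInv] at this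
          exact this.symm
        simp [htn, htm, hxy]
      · rw [if_neg he]
        rcases eq_or_ne t x.length with h1 | h1
        · rcases eq_or_ne t y.length with h2 | h2
          · exfalso; apply he
            simp only [← h1, Nat.sub_self, List.take_zero, List.nil_append,
              List.drop_eq_nil_iff, wordInv_length]
            omega
          · simp [h2]
        · simp [h1]
    · rw [if_neg hc]
      rcases eq_or_ne t x.length with h1 | h1
      · rcases eq_or_ne t y.length with h2 | h2
        · by_cases hxy : x = y
          · exfalso; apply hc
            subst hxy
            rw [h1]
            simp [List.take_of_length_le, wordInv_length, h1 ▸ h2.ge]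
          · simp [hxy]
        · simp [h2]
      · simp [h1]
  rw [Finset.sum_congr rfl key]
  by_cases hxy : x = y
  · subst hxy
    rw [if_pos rfl]
    simp only [eq_self_iff_true, and_true, and_self]
    rw [Finset.sum_ite_eq' (Finset.range (min x.length (wordInv s x).length + 1)) x.length
      (fun _ => (1 : ℤ))]
    simp [wordInv_length]
  · rw [if_neg hxy, Finset.sum_eq_zero]
    intro t _
    simp [hxy]
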